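/- arXiv:2304.04855 — 2 statements merged into one kernel-verified Lean document; each statement's English description precedes it below -/
import Mathlib

section
/- Let q be a prime power and F_q the finite field with q elements. For every integer t with 3 ≤ t ≤ q + 2, the number of caps of size t in the affine plane F_q² is at most (q⁴ / t!) · ∏_{i=2}^{t−1} min{ q², q³ / C(i,2) }, where C(i,2) = i(i−1)/2. -/
/-- A cap in the affine plane `F²`: a finite set of points no three of which are collinear. -/
def IsCap {F : Type*} [Field F] (S : Finset (F × F)) : Prop :=
  ∀ a ∈ S, ∀ b ∈ S, ∀ c ∈ S, a ≠ b → a ≠ c → b ≠ c →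
    ¬Collinear F ({a, b, c} : Set (F × F))

open Finset
open scoped Classical

set_option linter.unusedSectionVars false

noncomputable section


section Lines

variable {F : Type} [Field F]

lemma collinear_triple_iff {a b x : F × F} (hab : a ≠ b) :
    Collinear F ({a, b, x} : Set (F × F)) ↔ ∃ t : F, x = t • (b - a) + a := by
  constructor
  · intro h
    rw [collinear_iff_exists_forall_eq_smul_vadd] at h
    obtain ⟨p₀, v, hv⟩ := h
    obtain ⟨r₁, h₁⟩ := hv a (by simp)
    obtain ⟨r₂, h₂⟩ := hv b (by simp)
    obtain ⟨r₃, h₃⟩ := hv x (by simp)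
    have hba : b - a = (r₂ - r₁) • v := by
      rw [h₁, h₂]; simp [vadd_eq_add, sub_smul]
    have hxa : x - a = (r₃ - r₁) • v := by
      rw [h₁, h₃]; simp [vadd_eq_add, sub_smul]
    have hr : r₂ - r₁ ≠ 0 := by
      intro h0
      apply hab
      have : b - a = 0 := by rw [hba, h0, zero_smul]
      exact (sub_eq_zero.mp this).symm
    refine ⟨(r₃ - r₁) / (r₂ - r₁), ?_⟩
    have : ((r₃ - r₁) / (r₂ - r₁)) • (b - a) = x - a := by
      rw [hba, smul_smul, div_mul_cancel₀ _ hr, hxa]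
    rw [this]; abel
  · rintro ⟨t, rfl⟩
    rw [collinear_iff_exists_forall_eq_smul_vadd]
    refine ⟨a, b - a, ?_⟩
    intro p hp
    rcases hp with rfl | rfl | rfl
    · exact ⟨0, by simp⟩
    · exact ⟨1, by simp [vadd_eq_add]⟩
    · exact ⟨t, by simp [vadd_eq_add]⟩

variable [Fintype F]

def lineThrough (a b : F × F) : Finset (F × F) :=
  Finset.univ.filter (fun x => Collinear F ({a, b, x} : Set (F × F)))

lemma mem_lineThrough {a b x : F × F} :
    x ∈ lineThrough a b ↔ Collinear F ({a, b, x} : Set (F × F)) := by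
  simp [lineThrough]

lemma left_mem_lineThrough {a b : F × F} : a ∈ lineThrough a b := by
  rw [mem_lineThrough]
  have : ({a, b, a} : Set (F × F)) = {a, b} := by
    ext z; simp; tauto
  rw [this]; exact collinear_pair F a b

lemma right_mem_lineThrough {a b : F × F} : b ∈ lineThrough a b := by
  rw [mem_lineThrough]
  have : ({a, b, b} : Set (F × F)) = {a, b} := by
    ext z; simp
  rw [this]; exact collinear_pair F a b

lemma lineThrough_eq_image {a b : F × F} (hab : a ≠ b) :
    lineThrough a b = Finset.univ.image (fun t : F => t • (b - a) + a) := by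
  ext x
  simp only [mem_lineThrough, Finset.mem_image, collinear_triple_iff hab]
  constructor
  · rintro ⟨t, rfl⟩; exact ⟨t, Finset.mem_univ t, rfl⟩
  · rintro ⟨t, _, rfl⟩; exact ⟨t, rfl⟩

lemma card_lineThrough {a b : F × F} (hab : a ≠ b) :
    (lineThrough a b).card = Fintype.card F := by
  rw [lineThrough_eq_image hab, Finset.card_image_of_injective _ ?_, Finset.card_univ]
  intro s t h
  simp only [add_left_inj] at h
  have : (s - t) • (b - a) = 0 := by rw [sub_smul, h, sub_self]
  rcases smul_eq_zero.mp this with h' | h'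
  · exact sub_eq_zero.mp h'
  · exact absurd (sub_eq_zero.mp h').symm hab

lemma lineThrough_unique {a b x y : F × F} (hab : a ≠ b) (hxy : x ≠ y)
    (hx : x ∈ lineThrough a b) (hy : y ∈ lineThrough a b) :
    lineThrough a b = lineThrough x y := by
  have hsub : lineThrough a b ⊆ lineThrough x y := by
    intro z hz
    rw [lineThrough_eq_image hab] at hx hy hz
    simp only [Finset.mem_image, Finset.mem_univ, true_and] at hx hy hz
    obtain ⟨s, rfl⟩ := hx
    obtain ⟨u, rfl⟩ := hy
    obtain ⟨r, rfl⟩ := hz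
    have hsu : u - s ≠ 0 := sub_ne_zero.mpr fun h0 => hxy (by rw [h0])
    rw [mem_lineThrough, collinear_triple_iff hxy]
    refine ⟨(r - s) / (u - s), ?_⟩
    have h1 : (u • (b - a) + a) - (s • (b - a) + a) = (u - s) • (b - a) := by
      rw [sub_smul]; abel
    rw [h1, smul_smul, div_mul_cancel₀ _ hsu, sub_smul]
    abel
  exact Finset.eq_of_subset_of_card_le hsub
    (by rw [card_lineThrough hab, card_lineThrough hxy])

end Lines


lemma avoiding_lines_bound {α : Type} [Fintype α] (q : ℕ)
    (hcard : Fintype.card α = q ^ 2)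
    (ℒ : Finset (Finset α)) (U : Finset α) (hU : U.Nonempty)
    (hlq : ∀ ℓ ∈ ℒ, ℓ.card = q)
    (hdisj : ∀ ℓ ∈ ℒ, ∀ x ∈ U, x ∉ ℓ)
    (hpair : ∀ ℓ ∈ ℒ, ∀ ℓ' ∈ ℒ, ℓ ≠ ℓ' →
      ∀ x y : α, x ∈ ℓ → x ∈ ℓ' → y ∈ ℓ → y ∈ ℓ' → x = y) :
    ℒ.card * U.card ≤ q ^ 3 := by
  rcases Nat.eq_zero_or_pos ℒ.card with hL0 | hLpos
  · simp [hL0]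
  set L := ℒ.card with hLdef
  set u := U.card with hudef
  set comp := Finset.univ \ U with hcomp
  have hsub : ∀ ℓ ∈ ℒ, ℓ ⊆ comp := by
    intro ℓ hℓ x hx
    simp only [hcomp, Finset.mem_sdiff, Finset.mem_univ, true_and]
    exact fun hxU => hdisj ℓ hℓ x hxU hx
  have hm : comp.card = q ^ 2 - u := by
    rw [hcomp, Finset.card_sdiff_of_subset (Finset.subset_univ U), Finset.card_univ, hcard]
  have huq : u ≤ q ^ 2 := by
    rw [← hcard, ← Finset.card_univ]; exact Finset.card_le_card (Finset.subset_univ U)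
  set d : α → ℕ := fun p => (ℒ.filter (fun ℓ => p ∈ ℓ)).card with hd
  -- first moment
  have hdsum : ∀ p, d p = ∑ ℓ ∈ ℒ, if p ∈ ℓ then 1 else 0 := by
    intro p; exact Finset.card_filter _ _
  have S1 : ∑ p ∈ comp, d p = L * q := by
    calc ∑ p ∈ comp, d p = ∑ p ∈ comp, ∑ ℓ ∈ ℒ, if p ∈ ℓ then 1 else 0 := by
          exact Finset.sum_congr rfl fun p _ => hdsum p
      _ = ∑ ℓ ∈ ℒ, ∑ p ∈ comp, if p ∈ ℓ then 1 else 0 := Finset.sum_comm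
      _ = ∑ ℓ ∈ ℒ, ℓ.card := by
          refine Finset.sum_congr rfl fun ℓ hℓ => ?_
          rw [← Finset.card_filter]
          congr 1
          ext z
          simp only [Finset.mem_filter]
          exact ⟨fun h => h.2, fun h => ⟨hsub ℓ hℓ h, h⟩⟩
      _ = L * q := by
          rw [Finset.sum_congr rfl fun ℓ hℓ => hlq ℓ hℓ]; simp [mul_comm, hLdef]
  -- second moment
  have S2 : ∑ p ∈ comp, (d p) ^ 2 ≤ L * (q + L) := by
    have expand : ∑ p ∈ comp, (d p) ^ 2
        = ∑ ℓ ∈ ℒ, ∑ ℓ' ∈ ℒ, (comp.filter (fun p => p ∈ ℓ ∧ p ∈ ℓ')).card := by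
      have : ∀ p, (d p) ^ 2 = ∑ ℓ ∈ ℒ, ∑ ℓ' ∈ ℒ,
          ((if p ∈ ℓ then 1 else 0) * (if p ∈ ℓ' then 1 else 0)) := by
        intro p
        rw [sq, hdsum p, Finset.sum_mul_sum]
      rw [Finset.sum_congr rfl fun p _ => this p]
      rw [Finset.sum_comm]
      refine Finset.sum_congr rfl fun ℓ _ => ?_
      rw [Finset.sum_comm]
      refine Finset.sum_congr rfl fun ℓ' _ => ?_
      rw [Finset.card_filter]
      refine Finset.sum_congr rfl fun p _ => ?_
      by_cases h1 : p ∈ ℓ <;> by_cases h2 : p ∈ ℓ' <;> simp [h1, h2]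
    rw [expand]
    have bound : ∀ ℓ ∈ ℒ, ∑ ℓ' ∈ ℒ, (comp.filter (fun p => p ∈ ℓ ∧ p ∈ ℓ')).card ≤ q + L := by
      intro ℓ hℓ
      rw [← Finset.add_sum_erase _ _ hℓ]
      have h1 : (comp.filter (fun p => p ∈ ℓ ∧ p ∈ ℓ)).card ≤ q := by
        refine le_trans (Finset.card_le_card ?_) (le_of_eq (hlq ℓ hℓ))
        intro z hz
        exact (Finset.mem_filter.mp hz).2.1
      have h2 : ∑ ℓ' ∈ ℒ.erase ℓ, (comp.filter (fun p => p ∈ ℓ ∧ p ∈ ℓ')).card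
          ≤ ∑ _ℓ' ∈ ℒ.erase ℓ, 1 := by
        refine Finset.sum_le_sum fun ℓ' hℓ' => ?_
        have hne : ℓ ≠ ℓ' := fun h => (Finset.mem_erase.mp hℓ').1 h.symm
        refine Finset.card_le_one.mpr fun a ha b hb => ?_
        have ha' := Finset.mem_filter.mp ha
        have hb' := Finset.mem_filter.mp hb
        exact hpair ℓ hℓ ℓ' (Finset.mem_erase.mp hℓ').2 hne a b ha'.2.1 ha'.2.2 hb'.2.1 hb'.2.2
      calc _ ≤ q + ∑ _ℓ' ∈ ℒ.erase ℓ, 1 := Nat.add_le_add h1 h2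
        _ ≤ q + L := by
          simp only [Finset.sum_const, smul_eq_mul, mul_one]
          exact Nat.add_le_add_left (le_trans (Finset.card_le_card (Finset.erase_subset _ _))
            le_rfl) q
    calc ∑ ℓ ∈ ℒ, ∑ ℓ' ∈ ℒ, (comp.filter (fun p => p ∈ ℓ ∧ p ∈ ℓ')).card
        ≤ ∑ _ℓ ∈ ℒ, (q + L) := Finset.sum_le_sum bound
      _ = L * (q + L) := by simp [mul_comm, hLdef]
  -- Cauchy-Schwarz
  have CS : (L * q) ^ 2 ≤ (q ^ 2 - u) * (L * (q + L)) := by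
    calc (L * q) ^ 2 = (∑ p ∈ comp, d p) ^ 2 := by rw [S1]
      _ ≤ comp.card * ∑ p ∈ comp, (d p) ^ 2 := sq_sum_le_card_mul_sum_sq
      _ ≤ (q ^ 2 - u) * (L * (q + L)) := by
          rw [hm]; exact Nat.mul_le_mul_left _ S2
  -- conclude over the reals
  have hu1 : 1 ≤ u := Finset.card_pos.mpr hU
  have key : ((L : ℝ) * q) ^ 2 ≤ ((q : ℝ) ^ 2 - u) * (L * (q + L)) := by
    have := CS
    have hcast : ((q ^ 2 - u : ℕ) : ℝ) = (q : ℝ) ^ 2 - u := by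
      push_cast [Nat.cast_sub huq]; ring
    calc ((L : ℝ) * q) ^ 2 = ((L * q) ^ 2 : ℕ) := by push_cast; ring
      _ ≤ (((q ^ 2 - u) * (L * (q + L)) : ℕ) : ℝ) := by exact_mod_cast Nat.cast_le.mpr this
      _ = ((q : ℝ) ^ 2 - u) * (L * (q + L)) := by rw [Nat.cast_mul, hcast]; push_cast; ring
  have goalR : (L : ℝ) * u ≤ (q : ℝ) ^ 3 := by
    have hLR : (1 : ℝ) ≤ L := by exact_mod_cast hLpos
    have huR : (1 : ℝ) ≤ u := by exact_mod_cast hu1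
    have hqR : (0 : ℝ) ≤ q := Nat.cast_nonneg q
    nlinarith [key, mul_nonneg (mul_nonneg (Nat.cast_nonneg u : (0:ℝ) ≤ u) hqR) (hLR.trans_lt' zero_lt_one).le]
  exact_mod_cast goalR


lemma two_mul_choose_two (n : ℕ) : 2 * n.choose 2 = n * (n - 1) := by
  induction n with
  | zero => simp
  | succ m ih =>
    rw [Nat.choose_succ_succ, Nat.mul_add, ih]
    cases m with
    | zero => simp
    | succ k => simp [Nat.choose_one_right]; ring

section Caps

variable {F : Type} [Field F] [Fintype F]

lemma IsCap.mono {S T : Finset (F × F)} (h : S ⊆ T) (hT : IsCap T) : IsCap S :=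
  fun a ha b hb c hc => hT a (h ha) b (h hb) c (h hc)

def capExt (S : Finset (F × F)) : Finset (F × F) :=
  Finset.univ.filter (fun x => x ∉ S ∧ IsCap (insert x S))

lemma mem_capExt {S : Finset (F × F)} {x : F × F} :
    x ∈ capExt S ↔ x ∉ S ∧ IsCap (insert x S) := by simp [capExt]

lemma card_prod_sq : Fintype.card (F × F) = Fintype.card F ^ 2 := by
  rw [Fintype.card_prod, sq]

/-- The key extension bound coming from the line-avoidance lemma. -/
lemma capExt_card_mul_choose {S : Finset (F × F)} (hS : IsCap S) {n : ℕ}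
    (hn : S.card = n) (h2 : 2 ≤ n) :
    (capExt S).card * n.choose 2 ≤ Fintype.card F ^ 3 := by
  set q := Fintype.card F with hqdef
  rcases (capExt S).eq_empty_or_nonempty with he | hne
  · simp [he]
  set ℒ : Finset (Finset (F × F)) :=
    S.offDiag.image (fun p : (F × F) × (F × F) => lineThrough p.1 p.2) with hℒ
  have hlq : ∀ ℓ ∈ ℒ, ℓ.card = q := by
    intro ℓ hℓ
    obtain ⟨p, hp, rfl⟩ := Finset.mem_image.mp hℓ
    exact card_lineThrough (Finset.mem_offDiag.mp hp).2.2
  have hdisj : ∀ ℓ ∈ ℒ, ∀ x ∈ capExt S, x ∉ ℓ := by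
    intro ℓ hℓ x hx hxℓ
    obtain ⟨p, hp, rfl⟩ := Finset.mem_image.mp hℓ
    obtain ⟨ha, hb, hab⟩ := Finset.mem_offDiag.mp hp
    obtain ⟨hxS, hcap⟩ := mem_capExt.mp hx
    have hax : p.1 ≠ x := fun h => hxS (h ▸ ha)
    have hbx : p.2 ≠ x := fun h => hxS (h ▸ hb)
    exact hcap p.1 (Finset.mem_insert_of_mem ha) p.2 (Finset.mem_insert_of_mem hb)
      x (Finset.mem_insert_self x S) hab hax hbx (mem_lineThrough.mp hxℓ)
  have hpair : ∀ ℓ ∈ ℒ, ∀ ℓ' ∈ ℒ, ℓ ≠ ℓ' →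
      ∀ x y : F × F, x ∈ ℓ → x ∈ ℓ' → y ∈ ℓ → y ∈ ℓ' → x = y := by
    intro ℓ hℓ ℓ' hℓ' hne x y hx1 hx2 hy1 hy2
    by_contra hxy
    obtain ⟨p, hp, rfl⟩ := Finset.mem_image.mp hℓ
    obtain ⟨p', hp', rfl⟩ := Finset.mem_image.mp hℓ'
    have hab := (Finset.mem_offDiag.mp hp).2.2
    have hcd := (Finset.mem_offDiag.mp hp').2.2
    exact hne ((lineThrough_unique hab hxy hx1 hy1).trans
      (lineThrough_unique hcd hxy hx2 hy2).symm)
  have hLU : ℒ.card * (capExt S).card ≤ q ^ 3 :=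
    avoiding_lines_bound q card_prod_sq ℒ (capExt S) hne hlq hdisj hpair
  have hfiber : ∀ ℓ ∈ ℒ, (S.offDiag.filter
      (fun p : (F × F) × (F × F) => lineThrough p.1 p.2 = ℓ)).card ≤ 2 := by
    intro ℓ hℓ
    obtain ⟨⟨a, b⟩, hp, rfl⟩ := Finset.mem_image.mp hℓ
    obtain ⟨ha, hb, hab⟩ := Finset.mem_offDiag.mp hp
    have hsub : S.offDiag.filter
        (fun p : (F × F) × (F × F) => lineThrough p.1 p.2 = lineThrough a b)
        ⊆ {(a, b), (b, a)} := by
      rintro ⟨c, d⟩ hcd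
      obtain ⟨hmem, heq⟩ := Finset.mem_filter.mp hcd
      obtain ⟨hc, hd, hcdne⟩ := Finset.mem_offDiag.mp hmem
      have hcl : c ∈ lineThrough a b := heq ▸ (left_mem_lineThrough)
      have hdl : d ∈ lineThrough a b := heq ▸ (right_mem_lineThrough)
      have hcab : c = a ∨ c = b := by
        by_contra hcc
        push_neg at hcc
        exact hS a ha b hb c hc hab (Ne.symm hcc.1) (Ne.symm hcc.2) (mem_lineThrough.mp hcl)
      have hdab : d = a ∨ d = b := by
        by_contra hdd
        push_neg at hdd
        exact hS a ha b hb d hd hab (Ne.symm hdd.1) (Ne.symm hdd.2) (mem_lineThrough.mp hdl)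
      simp only [Finset.mem_insert, Finset.mem_singleton, Prod.mk.injEq]
      rcases hcab with rfl | rfl
      · rcases hdab with rfl | rfl
        · exact absurd rfl hcdne
        · exact Or.inl ⟨rfl, rfl⟩
      · rcases hdab with rfl | rfl
        · exact Or.inr ⟨rfl, rfl⟩
        · exact absurd rfl hcdne
    calc _ ≤ ({(a, b), (b, a)} : Finset ((F × F) × (F × F))).card := Finset.card_le_card hsub
      _ ≤ 2 := Finset.card_insert_le _ _ |>.trans (by simp)
  have hcount : S.offDiag.card ≤ 2 * ℒ.card := Finset.card_le_mul_card_image _ 2 hfiber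
  have hoff : S.offDiag.card = n * (n - 1) := by
    rw [Finset.offDiag_card, hn]
    cases n with
    | zero => simp
    | succ k => simp [Nat.mul_succ]
  have hkey : 2 * ((capExt S).card * n.choose 2) ≤ 2 * q ^ 3 := by
    calc 2 * ((capExt S).card * n.choose 2) = (capExt S).card * (2 * n.choose 2) := by ring
      _ = (capExt S).card * (n * (n - 1)) := by rw [two_mul_choose_two]
      _ ≤ (capExt S).card * (2 * ℒ.card) := Nat.mul_le_mul_left _ (hoff ▸ hcount)
      _ = 2 * (ℒ.card * (capExt S).card) := by ring
      _ ≤ 2 * q ^ 3 := Nat.mul_le_mul_left _ hLU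
  exact Nat.le_of_mul_le_mul_left hkey two_pos

def capSets (F : Type) [Field F] [Fintype F] (n : ℕ) : Finset (Finset (F × F)) :=
  Finset.univ.filter (fun S : Finset (F × F) => IsCap S ∧ S.card = n)

lemma mem_capSets {n : ℕ} {S : Finset (F × F)} :
    S ∈ capSets F n ↔ IsCap S ∧ S.card = n := by simp [capSets]

lemma step_count (n : ℕ) :
    (n + 1) * (capSets F (n + 1)).card ≤ ∑ S ∈ capSets F n, (capExt S).card := by
  have hmaps : ∀ p ∈ (capSets F (n + 1)).sigma (fun T => T),
      (⟨p.1.erase p.2, p.2⟩ : Σ _ : Finset (F × F), F × F)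
        ∈ (capSets F n).sigma (fun S => capExt S) := by
    rintro ⟨T, x⟩ hp
    obtain ⟨hT, hxT⟩ := Finset.mem_sigma.mp hp
    obtain ⟨hcap, hcard⟩ := mem_capSets.mp hT
    refine Finset.mem_sigma.mpr ⟨mem_capSets.mpr ⟨hcap.mono (Finset.erase_subset _ _), ?_⟩, ?_⟩
    · rw [Finset.card_erase_of_mem hxT, hcard]; rfl
    · exact mem_capExt.mpr ⟨Finset.notMem_erase _ _, by rw [Finset.insert_erase hxT]; exact hcap⟩
  calc (n + 1) * (capSets F (n + 1)).card = ∑ T ∈ capSets F (n + 1), T.card := by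
        rw [Finset.sum_congr rfl (fun T hT => ((mem_capSets.mp hT).2 : T.card = n + 1))]
        simp [mul_comm]
    _ = ((capSets F (n + 1)).sigma (fun T => T)).card := by rw [Finset.card_sigma]
    _ ≤ ((capSets F n).sigma (fun S => capExt S)).card := by
        refine Finset.card_le_card_of_injOn _ hmaps ?_
        rintro ⟨T, x⟩ hp ⟨T', x'⟩ hp' heq
        obtain ⟨h1, h2⟩ := Sigma.mk.inj_iff.mp heq
        have hx : x = x' := eq_of_heq h2
        subst hx
        have hxT : x ∈ T := (Finset.mem_sigma.mp (Finset.mem_coe.mp hp)).2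
        have hxT' : x ∈ T' := (Finset.mem_sigma.mp (Finset.mem_coe.mp hp')).2
        have hTT : T = T' := by
          rw [← Finset.insert_erase hxT, ← Finset.insert_erase hxT', h1]
        rw [hTT]
    _ = ∑ S ∈ capSets F n, (capExt S).card := Finset.card_sigma _ _


lemma capExt_card_le_real {S : Finset (F × F)} (hS : IsCap S) {n : ℕ}
    (hn : S.card = n) (h2 : 2 ≤ n) :
    ((capExt S).card : ℝ) ≤
      min ((Fintype.card F : ℝ) ^ 2) ((Fintype.card F : ℝ) ^ 3 / (n.choose 2)) := by
  refine le_min ?_ ?_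
  · have h := Finset.card_le_univ (capExt S)
    rw [card_prod_sq] at h
    exact_mod_cast h
  · have h := capExt_card_mul_choose hS hn h2
    have hpos : (0 : ℝ) < (n.choose 2 : ℝ) := by
      exact_mod_cast Nat.choose_pos h2
    rw [le_div_iff₀ hpos]
    exact_mod_cast h

lemma step_real (n : ℕ) (h2 : 2 ≤ n) :
    ((capSets F (n + 1)).card : ℝ) ≤ ((capSets F n).card : ℝ) *
      (min ((Fintype.card F : ℝ) ^ 2) ((Fintype.card F : ℝ) ^ 3 / (n.choose 2))) / (n + 1) := by
  set B := min ((Fintype.card F : ℝ) ^ 2) ((Fintype.card F : ℝ) ^ 3 / (n.choose 2)) with hB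
  have hs : (∑ S ∈ capSets F n, ((capExt S).card : ℝ)) ≤ ((capSets F n).card : ℝ) * B := by
    calc ∑ S ∈ capSets F n, ((capExt S).card : ℝ) ≤ ∑ _S ∈ capSets F n, B :=
          Finset.sum_le_sum fun S hS =>
            capExt_card_le_real (mem_capSets.mp hS).1 (mem_capSets.mp hS).2 h2
      _ = ((capSets F n).card : ℝ) * B := by rw [Finset.sum_const, nsmul_eq_mul]
  have hc := step_count (F := F) n
  have hcR : ((n : ℝ) + 1) * ((capSets F (n + 1)).card : ℝ)
      ≤ ∑ S ∈ capSets F n, ((capExt S).card : ℝ) := by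
    push_cast
    exact_mod_cast hc
  have hpos : (0 : ℝ) < (n : ℝ) + 1 := by positivity
  rw [le_div_iff₀ hpos]
  calc ((capSets F (n + 1)).card : ℝ) * ((n : ℝ) + 1)
      = ((n : ℝ) + 1) * ((capSets F (n + 1)).card : ℝ) := by ring
    _ ≤ ((capSets F n).card : ℝ) * B := hcR.trans hs

lemma base_two : ((capSets F 2).card : ℝ) ≤ (Fintype.card F : ℝ) ^ 4 / 2 := by
  have hsub : capSets F 2 ⊆ Finset.univ.powersetCard 2 := by
    intro S hS
    exact Finset.mem_powersetCard.mpr ⟨Finset.subset_univ S, (mem_capSets.mp hS).2⟩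
  have h1 : (capSets F 2).card ≤ (Fintype.card (F × F)).choose 2 := by
    calc (capSets F 2).card ≤ (Finset.univ.powersetCard 2 : Finset (Finset (F × F))).card :=
          Finset.card_le_card hsub
      _ = (Fintype.card (F × F)).choose 2 := by rw [Finset.card_powersetCard, Finset.card_univ]
  have h2 : 2 * (capSets F 2).card ≤ Fintype.card F ^ 4 := by
    calc 2 * (capSets F 2).card ≤ 2 * (Fintype.card (F × F)).choose 2 :=
          Nat.mul_le_mul_left _ h1
      _ = Fintype.card (F × F) * (Fintype.card (F × F) - 1) := two_mul_choose_two _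
      _ ≤ Fintype.card (F × F) * Fintype.card (F × F) :=
          Nat.mul_le_mul_left _ (Nat.sub_le _ _)
      _ = Fintype.card F ^ 4 := by rw [card_prod_sq]; ring
  rw [le_div_iff₀ (by norm_num : (0:ℝ) < 2)]
  calc ((capSets F 2).card : ℝ) * 2 = ((2 * (capSets F 2).card : ℕ) : ℝ) := by push_cast; ring
    _ ≤ ((Fintype.card F ^ 4 : ℕ) : ℝ) := by exact_mod_cast h2
    _ = (Fintype.card F : ℝ) ^ 4 := by push_cast; ring

lemma main_bound : ∀ m : ℕ, 2 ≤ m → ((capSets F m).card : ℝ) ≤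
    (Fintype.card F : ℝ) ^ 4 / (Nat.factorial m) *
      ∏ i ∈ Finset.Icc 2 (m - 1),
        min ((Fintype.card F : ℝ) ^ 2) ((Fintype.card F : ℝ) ^ 3 / (i.choose 2)) := by
  intro m hm
  induction m, hm using Nat.le_induction with
  | base =>
    have : Finset.Icc 2 (2 - 1) = (∅ : Finset ℕ) := Finset.Icc_eq_empty (by norm_num)
    rw [this, Finset.prod_empty, mul_one]
    have : (Nat.factorial 2 : ℝ) = 2 := by norm_num [Nat.factorial]
    rw [this]
    exact base_two
  | succ n hn ih =>
    set q : ℝ := (Fintype.card F : ℝ) with hq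
    set Bf : ℕ → ℝ := fun i => min (q ^ 2) (q ^ 3 / (i.choose 2)) with hBf
    have hBnonneg : ∀ i, 0 ≤ Bf i := fun i =>
      le_min (by positivity) (by positivity)
    have hprodstep : (∏ i ∈ Finset.Icc 2 n, Bf i)
        = (∏ i ∈ Finset.Icc 2 (n - 1), Bf i) * Bf n := by
      have hn' : n - 1 + 1 = n := by omega
      calc (∏ i ∈ Finset.Icc 2 n, Bf i) = ∏ i ∈ Finset.Icc 2 (n - 1 + 1), Bf i := by rw [hn']
        _ = (∏ i ∈ Finset.Icc 2 (n - 1), Bf i) * Bf (n - 1 + 1) :=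
            Finset.prod_Icc_succ_top (by omega) _
        _ = (∏ i ∈ Finset.Icc 2 (n - 1), Bf i) * Bf n := by rw [hn']
    have h1 := step_real (F := F) n hn
    have hprodnonneg : 0 ≤ ∏ i ∈ Finset.Icc 2 (n - 1), Bf i :=
      Finset.prod_nonneg fun i _ => hBnonneg i
    have hfac : (0:ℝ) < (Nat.factorial n : ℝ) := by
      exact_mod_cast Nat.factorial_pos n
    calc ((capSets F (n + 1)).card : ℝ)
        ≤ ((capSets F n).card : ℝ) * Bf n / (n + 1) := h1
      _ ≤ (q ^ 4 / (Nat.factorial n) * ∏ i ∈ Finset.Icc 2 (n - 1), Bf i) * Bf n / (n + 1) := by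
          gcongr
      _ = q ^ 4 / (Nat.factorial (n + 1)) * ((∏ i ∈ Finset.Icc 2 (n - 1), Bf i) * Bf n) := by
          rw [Nat.factorial_succ]
          push_cast
          field_simp
      _ = q ^ 4 / (Nat.factorial (n + 1)) * ∏ i ∈ Finset.Icc 2 ((n + 1) - 1), Bf i := by
          rw [Nat.add_sub_cancel, hprodstep]

end Caps


end

/-- For a prime power `q`, the finite field `F` with `q` elements and `3 ≤ t ≤ q + 2`, the
number of caps of size `t` in the affine plane `F²` is at most
`(q⁴ / t!) · ∏_{i=2}^{t-1} min(q², q³ / C(i,2))`. -/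
theorem stmt13 (q : ℕ) (hq : IsPrimePow q)
    (F : Type) [Field F] [Fintype F] (hF : Fintype.card F = q)
    (t : ℕ) (ht3 : 3 ≤ t) (htq : t ≤ q + 2) :
    (Nat.card {S : Finset (F × F) // IsCap S ∧ S.card = t} : ℝ) ≤
      (q : ℝ) ^ 4 / (Nat.factorial t) *
        ∏ i ∈ Finset.Icc 2 (t - 1), min ((q : ℝ) ^ 2) ((q : ℝ) ^ 3 / (i.choose 2)) := by
  subst hF
  have hNat : Nat.card {S : Finset (F × F) // IsCap S ∧ S.card = t} = (capSets F t).card := by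
    rw [Nat.card_eq_fintype_card, Fintype.card_subtype]
    rfl
  rw [hNat]
  exact main_bound t (by omega)
end

section
/- Let s ≥ 1 be an integer, F an s-uniform hypergraph on a finite vertex set V(F), and let (z_i)_{i ∈ V(F)} be independent random indicator variables with Pr[z_i = 1] = p for all i, where 0 < p < 1. Let F′ = {A ∈ F : z_i = 1 for all i ∈ A}. Suppose there exists α > 0 such that |F| · p^{s(1−α)} < 1. Then for every real c ≥ e·2^s·s·α, Pr[ τ(F′) > s²·(c/α)^{s+1} ] ≤ s² · |V(F)|^{s−1} · p^c. -/
/-- The cover number `τ` of a hypergraph: the least size of a vertex set meeting all edges. -/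
noncomputable def coverNum {V : Type*} (F : Finset (Finset V)) : ℕ :=
  sInf {n : ℕ | ∃ T : Finset V, T.card ≤ n ∧ ∀ A ∈ F, ∃ v ∈ A, v ∈ T}

attribute [local instance] Classical.propDecidable

lemma coverNum_le {V : Type*} {F : Finset (Finset V)} {T : Finset V}
    (h : ∀ A ∈ F, ∃ v ∈ A, v ∈ T) : coverNum F ≤ T.card :=
  Nat.sInf_le ⟨T, le_rfl, h⟩

lemma exists_min_cover {V : Type*} [Fintype V] {F : Finset (Finset V)}
    (hne : ∀ A ∈ F, A.Nonempty) :
    ∃ T : Finset V, T.card ≤ coverNum F ∧ ∀ A ∈ F, ∃ v ∈ A, v ∈ T := by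
  have hset : coverNum F ∈
      {n : ℕ | ∃ T : Finset V, T.card ≤ n ∧ ∀ A ∈ F, ∃ v ∈ A, v ∈ T} := by
    apply Nat.sInf_mem
    refine ⟨(Finset.univ : Finset V).card, Finset.univ, le_rfl, fun A hA => ?_⟩
    obtain ⟨v, hv⟩ := hne A hA
    exact ⟨v, hv, Finset.mem_univ _⟩
  obtain ⟨T, hT1, hT2⟩ := hset
  exact ⟨T, hT1, hT2⟩

lemma exists_matching {V : Type*} [Fintype V] [DecidableEq V] {s : ℕ} (hs : 1 ≤ s) :
    ∀ (k : ℕ) (G : Finset (Finset V)), (∀ A ∈ G, A.card = s) →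
    s * k < coverNum G →
    ∃ 𝒮, 𝒮 ⊆ G ∧ 𝒮.card = k + 1 ∧ ∀ A ∈ 𝒮, ∀ B ∈ 𝒮, A ≠ B → Disjoint A B := by
  intro k
  induction k with
  | zero =>
    intro G hG h
    have hGne : G.Nonempty := by
      rcases G.eq_empty_or_nonempty with rfl | hne
      · exfalso
        have : coverNum (∅ : Finset (Finset V)) ≤ (∅ : Finset V).card :=
          coverNum_le (by simp)
        simp at this
        omega
      · exact hne
    obtain ⟨A, hA⟩ := hGne
    exact ⟨{A}, Finset.singleton_subset_iff.2 hA, Finset.card_singleton A, by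
      intro X hX Y hY hXY
      simp only [Finset.mem_singleton] at hX hY
      exact absurd (hX.trans hY.symm) hXY⟩
  | succ k ih =>
    intro G hG h
    have hGne : G.Nonempty := by
      rcases G.eq_empty_or_nonempty with rfl | hne
      · exfalso
        have : coverNum (∅ : Finset (Finset V)) ≤ (∅ : Finset V).card :=
          coverNum_le (by simp)
        simp at this
        omega
      · exact hne
    obtain ⟨A, hA⟩ := hGne
    set G' := G.filter (fun B => Disjoint A B) with hG'
    have hG'ne : ∀ B ∈ G', B.Nonempty := by
      intro B hB
      have := hG B (Finset.mem_filter.1 hB).1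
      rw [← Finset.card_pos, this]; omega
    obtain ⟨T', hT'card, hT'cov⟩ := exists_min_cover hG'ne
    have hcov : coverNum G ≤ coverNum G' + s := by
      have : coverNum G ≤ (T' ∪ A).card := by
        apply coverNum_le
        intro B hB
        by_cases hdis : Disjoint A B
        · obtain ⟨v, hv1, hv2⟩ := hT'cov B (Finset.mem_filter.2 ⟨hB, hdis⟩)
          exact ⟨v, hv1, Finset.mem_union_left _ hv2⟩
        · rw [Finset.not_disjoint_iff] at hdis
          obtain ⟨v, hvA, hvB⟩ := hdis
          exact ⟨v, hvB, Finset.mem_union_right _ hvA⟩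
      calc coverNum G ≤ (T' ∪ A).card := this
        _ ≤ T'.card + A.card := Finset.card_union_le _ _
        _ ≤ coverNum G' + s := by rw [hG A hA] at *; omega
    have hlt : s * k < coverNum G' := by
      have := h
      have hsk : s * (k + 1) = s * k + s := by ring
      omega
    obtain ⟨𝒮', h𝒮'sub, h𝒮'card, h𝒮'dis⟩ := ih G'
      (fun B hB => hG B (Finset.mem_filter.1 hB).1) hlt
    have hAnot : A ∉ 𝒮' := by
      intro hmem
      have hdisA : Disjoint A A := (Finset.mem_filter.1 (h𝒮'sub hmem)).2
      have hAe : A = ⊥ := disjoint_self.1 hdisA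
      have hcard := hG A hA
      rw [hAe] at hcard
      simp at hcard
      omega
    refine ⟨insert A 𝒮', ?_, ?_, ?_⟩
    · intro X hX
      rcases Finset.mem_insert.1 hX with rfl | hX'
      · exact hA
      · exact (Finset.mem_filter.1 (h𝒮'sub hX')).1
    · rw [Finset.card_insert_of_notMem hAnot, h𝒮'card]
    · intro X hX Y hY hXY
      rcases Finset.mem_insert.1 hX with rfl | hX' <;>
        rcases Finset.mem_insert.1 hY with rfl | hY'
      · exact absurd rfl hXY
      · exact (Finset.mem_filter.1 (h𝒮'sub hY')).2
      · exact ((Finset.mem_filter.1 (h𝒮'sub hX')).2).symm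
      · exact h𝒮'dis X hX' Y hY' hXY

lemma prob_all_true {V : Type*} [Fintype V] [DecidableEq V] (p : ℝ) (U : Finset V) :
    ∑ ω ∈ Finset.univ.filter (fun ω : V → Bool => ∀ i ∈ U, ω i = true),
      ∏ i : V, (if ω i then p else 1 - p) = p ^ U.card := by
  classical
  set g : V → Bool → ℝ := fun i b =>
    if i ∈ U then (if b then p else 0) else (if b then p else 1 - p) with hg
  have key : ∑ ω : V → Bool, ∏ i : V, g i (ω i) = p ^ U.card := by
    rw [← Fintype.piFinset_univ, ← Finset.prod_univ_sum (fun _ => (Finset.univ : Finset Bool)) g]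
    have : ∀ i : V, ∑ b : Bool, g i b = if i ∈ U then p else 1 := by
      intro i
      simp only [hg, Fintype.sum_bool]
      by_cases hi : i ∈ U <;> simp [hi]
    rw [Finset.prod_congr rfl (fun i _ => this i), Finset.prod_ite_mem,
      Finset.univ_inter, Finset.prod_const]
  rw [← key, ← Finset.sum_filter_add_sum_filter_not Finset.univ
    (fun ω : V → Bool => ∀ i ∈ U, ω i = true) (fun ω => ∏ i : V, g i (ω i))]
  have h1 : ∀ ω ∈ Finset.univ.filter (fun ω : V → Bool => ∀ i ∈ U, ω i = true),
      (∏ i : V, g i (ω i)) = ∏ i : V, (if ω i then p else 1 - p) := by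
    intro ω hω
    rw [Finset.mem_filter] at hω
    apply Finset.prod_congr rfl
    intro i _
    by_cases hi : i ∈ U
    · rw [hω.2 i hi]; simp [hg, hi]
    · simp [hg, hi]
  have h2 : ∀ ω ∈ Finset.univ.filter (fun ω : V → Bool => ¬ ∀ i ∈ U, ω i = true),
      (∏ i : V, g i (ω i)) = 0 := by
    intro ω hω
    rw [Finset.mem_filter] at hω
    push_neg at hω
    obtain ⟨i, hiU, hi⟩ := hω.2
    apply Finset.prod_eq_zero (Finset.mem_univ i)
    simp [hg, hiU, hi]
  rw [Finset.sum_congr rfl h1, Finset.sum_congr rfl h2]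
  simp

lemma sum_biUnion_le_nonneg {ι β : Type*} [DecidableEq β] (t : Finset ι) (B : ι → Finset β)
    (f : β → ℝ) (hf : ∀ b, 0 ≤ f b) :
    ∑ b ∈ t.biUnion B, f b ≤ ∑ j ∈ t, ∑ b ∈ B j, f b := by
  classical
  induction t using Finset.induction_on with
  | empty => simp
  | @insert a t ha ih =>
    rw [Finset.biUnion_insert, Finset.sum_insert ha]
    have hui := Finset.sum_union_inter (s₁ := B a) (s₂ := t.biUnion B) (f := f)
    have hnn : 0 ≤ ∑ b ∈ (B a ∩ t.biUnion B), f b := Finset.sum_nonneg fun b _ => hf b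
    linarith

/-- Random sparsification lemma: let `F` be an `s`-uniform hypergraph on a finite vertex set
`V`, keep each vertex independently with probability `p` (a random outcome is `ω : V → Bool`,
occurring with probability `∏ i, if ω i then p else 1 - p`), and let `F′ = F′(ω)` consist of
the edges of `F` all of whose vertices are kept.  If `|F| · p^(s(1-α)) < 1` for some `α > 0`,
then for every `c ≥ e·2^s·s·α`,
`Pr[τ(F′) > s²·(c/α)^(s+1)] ≤ s² · |V|^(s-1) · p^c`. -/
theorem stmt17 (s : ℕ) (hs : 1 ≤ s) (V : Type) [Fintype V] [DecidableEq V]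
    (F : Finset (Finset V)) (hF : ∀ A ∈ F, A.card = s)
    (p : ℝ) (hp0 : 0 < p) (hp1 : p < 1)
    (α : ℝ) (hα : 0 < α)
    (hsparse : (F.card : ℝ) * p ^ ((s : ℝ) * (1 - α)) < 1)
    (c : ℝ) (hc : Real.exp 1 * 2 ^ s * s * α ≤ c) :
    ∑ ω ∈ Finset.univ.filter (fun ω : V → Bool =>
        (s : ℝ) ^ 2 * (c / α) ^ (s + 1) <
          (coverNum (F.filter fun A => ∀ i ∈ A, ω i = true) : ℝ)),
      ∏ i : V, (if ω i then p else 1 - p) ≤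
    (s : ℝ) ^ 2 * (Fintype.card V : ℝ) ^ (s - 1) * p ^ c := by
  classical
  -- basic numeric facts
  have hs1 : (1 : ℝ) ≤ (s : ℝ) := by exact_mod_cast hs
  have he2 : (2 : ℝ) ≤ Real.exp 1 := by
    have := Real.add_one_le_exp (1 : ℝ); linarith
  have h2s : (1 : ℝ) ≤ 2 ^ s := one_le_pow₀ (by norm_num)
  have hprod : (1 : ℝ) ≤ Real.exp 1 * 2 ^ s * (s : ℝ) := by
    have h1 : (1 : ℝ) ≤ Real.exp 1 := by linarith
    have h2 : (1 : ℝ) * 1 ≤ Real.exp 1 * 2 ^ s := mul_le_mul h1 h2s zero_le_one (by linarith)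
    have h3 : (1 : ℝ) * 1 ≤ Real.exp 1 * 2 ^ s * (s : ℝ) :=
      mul_le_mul (by linarith) hs1 zero_le_one (by linarith)
    linarith
  have hαc : α ≤ c := by nlinarith
  have hcpos : 0 < c := lt_of_lt_of_le hα hαc
  have hca1 : 1 ≤ c / α := (one_le_div hα).2 hαc
  have hcap : 0 < c / α := lt_of_lt_of_le one_pos hca1
  have hsα : 0 < (s : ℝ) * α := mul_pos (by linarith) hα
  set m : ℕ := ⌈c / ((s : ℝ) * α)⌉₊ with hm
  have hmpos : 0 < (c / ((s : ℝ) * α)) := div_pos hcpos hsα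
  have hm1 : 1 ≤ m := by
    have : 0 < m := Nat.ceil_pos.2 hmpos
    omega
  have hmge : c / ((s : ℝ) * α) ≤ (m : ℝ) := Nat.le_ceil _
  have hmlt : (m : ℝ) < c / ((s : ℝ) * α) + 1 := Nat.ceil_lt_add_one hmpos.le
  have hs2 : (1 : ℝ) ≤ (s : ℝ) ^ 2 := by nlinarith
  -- the weight function
  set w : (V → Bool) → ℝ := fun ω => ∏ i : V, (if ω i then p else 1 - p) with hw
  have hwnn : ∀ ω, 0 ≤ w ω := by
    intro ω
    apply Finset.prod_nonneg
    intro i _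
    by_cases h : ω i <;> simp [h] <;> linarith
  -- threshold comparison : c/α ≤ t
  have ht1 : c / α ≤ (s : ℝ) ^ 2 * (c / α) ^ (s + 1) := by
    have h1 : c / α ≤ (c / α) ^ (s + 1) := le_self_pow₀ hca1 (by omega)
    nlinarith [pow_nonneg hcap.le (s + 1)]
  -- the family of "bad" matchings
  set M : Finset (Finset (Finset V)) := (F.powersetCard m).filter
    (fun 𝒮 => ∀ A ∈ 𝒮, ∀ B ∈ 𝒮, A ≠ B → Disjoint A B) with hM
  set Ef : Finset (Finset V) → Finset (V → Bool) := fun 𝒮 =>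
    Finset.univ.filter (fun ω : V → Bool => ∀ i ∈ 𝒮.biUnion id, ω i = true) with hEf
  -- the event is contained in the union of the Ef's
  have hsub : (Finset.univ.filter (fun ω : V → Bool =>
      (s : ℝ) ^ 2 * (c / α) ^ (s + 1) <
        (coverNum (F.filter fun A => ∀ i ∈ A, ω i = true) : ℝ))) ⊆ M.biUnion Ef := by
    intro ω hω
    rw [Finset.mem_filter] at hω
    set G := F.filter (fun A => ∀ i ∈ A, ω i = true) with hG
    have hGcard : ∀ A ∈ G, A.card = s := fun A hA => hF A (Finset.mem_filter.1 hA).1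
    have hlt : s * (m - 1) < coverNum G := by
      have hcast : ((s * (m - 1) : ℕ) : ℝ) < (coverNum G : ℝ) := by
        have heq : ((s * (m - 1) : ℕ) : ℝ) = (s : ℝ) * ((m : ℝ) - 1) := by
          rw [Nat.cast_mul, Nat.cast_sub hm1, Nat.cast_one]
        rw [heq]
        have hseq : (s : ℝ) * (c / ((s : ℝ) * α)) = c / α := by
          field_simp
        have h1 : (s : ℝ) * ((m : ℝ) - 1) < c / α := by
          have : (m : ℝ) - 1 < c / ((s : ℝ) * α) := by linarith
          calc (s : ℝ) * ((m : ℝ) - 1) < (s : ℝ) * (c / ((s : ℝ) * α)) := by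
                apply mul_lt_mul_of_pos_left this (by linarith)
            _ = c / α := hseq
        linarith [hω.2]
      exact_mod_cast hcast
    obtain ⟨𝒮, hsub𝒮, hcard𝒮, hdisj𝒮⟩ := exists_matching hs (m - 1) G hGcard hlt
    have hcardm : 𝒮.card = m := by omega
    rw [Finset.mem_biUnion]
    refine ⟨𝒮, ?_, ?_⟩
    · rw [hM, Finset.mem_filter]
      exact ⟨Finset.mem_powersetCard.2 ⟨hsub𝒮.trans (Finset.filter_subset _ _), hcardm⟩, hdisj𝒮⟩
    · rw [hEf, Finset.mem_filter]
      refine ⟨Finset.mem_univ _, ?_⟩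
      intro i hi
      rw [Finset.mem_biUnion] at hi
      obtain ⟨A, hA, hiA⟩ := hi
      exact (Finset.mem_filter.1 (hsub𝒮 hA)).2 i hiA
  -- key probability inequality : |F| p^s ≤ p^{sα}
  have hps : p ^ s = p ^ ((s : ℝ) * (1 - α)) * p ^ ((s : ℝ) * α) := by
    rw [← Real.rpow_add hp0, show (s : ℝ) * (1 - α) + (s : ℝ) * α = (s : ℝ) by ring,
      Real.rpow_natCast]
  have hkey : (F.card : ℝ) * p ^ s ≤ p ^ ((s : ℝ) * α) := by
    rw [hps, ← mul_assoc]
    calc (F.card : ℝ) * p ^ ((s : ℝ) * (1 - α)) * p ^ ((s : ℝ) * α)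
        ≤ 1 * p ^ ((s : ℝ) * α) :=
          mul_le_mul_of_nonneg_right hsparse.le (Real.rpow_nonneg hp0.le _)
      _ = p ^ ((s : ℝ) * α) := one_mul _
  have hcm : c ≤ (s : ℝ) * α * (m : ℝ) := by
    have := (div_le_iff₀ hsα).1 hmge
    linarith
  -- nonemptiness of V (in the nontrivial case)
  rcases Finset.eq_empty_or_nonempty (Finset.univ.filter (fun ω : V → Bool =>
      (s : ℝ) ^ 2 * (c / α) ^ (s + 1) <
        (coverNum (F.filter fun A => ∀ i ∈ A, ω i = true) : ℝ))) with hE | hE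
  · rw [hE, Finset.sum_empty]
    have hpc : 0 < p ^ c := Real.rpow_pos_of_pos hp0 c
    positivity
  · obtain ⟨ω₀, hω₀⟩ := hE
    rw [Finset.mem_filter] at hω₀
    have hcard1 : 1 ≤ (Fintype.card V : ℝ) := by
      set G := F.filter (fun A => ∀ i ∈ A, ω₀ i = true) with hG
      have hGpos : 0 < coverNum G := by
        rcases Nat.eq_zero_or_pos (coverNum G) with h' | h'
        · exfalso
          have h2 := hω₀.2
          rw [h'] at h2
          rw [Nat.cast_zero] at h2
          nlinarith
        · exact h'
      have hGne : G.Nonempty := by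
        rcases G.eq_empty_or_nonempty with h | h
        · exfalso
          have hle : coverNum G ≤ (∅ : Finset V).card := by
            rw [h]; exact coverNum_le (by simp)
          simp at hle
          omega
        · exact h
      obtain ⟨A, hA⟩ := hGne
      have : A.card = s := hF A (Finset.mem_filter.1 hA).1
      have hAne : A.Nonempty := by rw [← Finset.card_pos, this]; omega
      obtain ⟨v, _⟩ := hAne
      have : 0 < Fintype.card V := Fintype.card_pos_iff.2 ⟨v⟩
      exact_mod_cast this
    -- main calc
    have hstep : ∀ 𝒮 ∈ M, ∑ ω ∈ Ef 𝒮, w ω = p ^ (s * m) := by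
      intro 𝒮 h𝒮
      rw [hM, Finset.mem_filter, Finset.mem_powersetCard] at h𝒮
      obtain ⟨⟨hsubF, hcardm⟩, hdisj⟩ := h𝒮
      have hcard : (𝒮.biUnion id).card = s * m := by
        rw [show (𝒮.biUnion id) = 𝒮.biUnion (fun A => A) from rfl,
          Finset.card_biUnion hdisj]
        have hsum : ∀ A ∈ 𝒮, A.card = s := fun A hA => hF A (hsubF hA)
        rw [Finset.sum_congr rfl hsum, Finset.sum_const, smul_eq_mul, hcardm, Nat.mul_comm]
      rw [hEf, hw]
      rw [prob_all_true p (𝒮.biUnion id), hcard]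
    calc ∑ ω ∈ Finset.univ.filter (fun ω : V → Bool =>
            (s : ℝ) ^ 2 * (c / α) ^ (s + 1) <
              (coverNum (F.filter fun A => ∀ i ∈ A, ω i = true) : ℝ)), w ω
        ≤ ∑ ω ∈ M.biUnion Ef, w ω :=
          Finset.sum_le_sum_of_subset_of_nonneg hsub (fun ω _ _ => hwnn ω)
      _ ≤ ∑ 𝒮 ∈ M, ∑ ω ∈ Ef 𝒮, w ω := sum_biUnion_le_nonneg M Ef w hwnn
      _ = ∑ 𝒮 ∈ M, p ^ (s * m) := Finset.sum_congr rfl hstep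
      _ = (M.card : ℝ) * p ^ (s * m) := by rw [Finset.sum_const, nsmul_eq_mul]
      _ ≤ ((F.card : ℝ)) ^ m * p ^ (s * m) := by
          apply mul_le_mul_of_nonneg_right _ (pow_nonneg hp0.le _)
          have h1 : M.card ≤ (F.powersetCard m).card := Finset.card_filter_le _ _
          have h2 : (F.powersetCard m).card = F.card.choose m := Finset.card_powersetCard m F
          have h3 : F.card.choose m ≤ F.card ^ m := Nat.choose_le_pow _ _
          have : M.card ≤ F.card ^ m := by omega
          exact_mod_cast this
      _ = ((F.card : ℝ) * p ^ s) ^ m := by rw [mul_pow, ← pow_mul]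
      _ ≤ (p ^ ((s : ℝ) * α)) ^ m := by
          apply pow_le_pow_left₀ _ hkey
          positivity
      _ = p ^ ((s : ℝ) * α * (m : ℝ)) := by
          rw [← Real.rpow_natCast (p ^ ((s : ℝ) * α)) m, ← Real.rpow_mul hp0.le]
      _ ≤ p ^ c := Real.rpow_le_rpow_of_exponent_ge hp0 hp1.le hcm
      _ ≤ (s : ℝ) ^ 2 * (Fintype.card V : ℝ) ^ (s - 1) * p ^ c := by
          have hpc : 0 < p ^ c := Real.rpow_pos_of_pos hp0 c
          have hV : (1 : ℝ) ≤ (Fintype.card V : ℝ) ^ (s - 1) := one_le_pow₀ hcard1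
          have h1 : (1 : ℝ) * 1 ≤ (s : ℝ) ^ 2 * (Fintype.card V : ℝ) ^ (s - 1) :=
            mul_le_mul hs2 hV zero_le_one (by linarith)
          rw [one_mul] at h1
          exact le_mul_of_one_le_left hpc.le h1
end
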